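/- Let μ > 0. For every positive integer m there exists κ in the open interval (π(2m−1), π(2m+1)) such that (2/κ)·tan(κ/2) = 1 − κ²/μ. Hence the antisymmetric characteristic equation has infinitely many positive wavenumber solutions. -/

import Mathlib

open Real Set

set_option maxHeartbeats 1000000 in
private lemma stmt10_key (μ : ℝ) (hμ : 0 < μ) (m : ℕ) (hm : 0 < m) :
    ∃ κ ∈ Set.Ioo (Real.pi * (2 * (m : ℝ) - 1)) (Real.pi * (2 * (m : ℝ) + 1)),
      (2 / κ) * Real.tan (κ / 2) = 1 - κ ^ 2 / μ := by
  have hπ := Real.pi_pos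
  set L : ℝ := π * (2 * m - 1) with hL
  set R : ℝ := π * (2 * m + 1) with hR
  have hm1 : (1 : ℝ) ≤ m := by exact_mod_cast hm
  have hLpos : 0 < L := by apply mul_pos hπ; nlinarith
  have hRpos : 0 < R := by positivity
  set T : ℝ := (1 + R ^ 2 / μ) * R with hT
  have hTpos : 0 < T := by positivity
  set a : ℝ := 2 * m * π - 2 * arctan T with ha
  set b : ℝ := 2 * m * π + 2 * arctan R with hb
  have haT : arctan T < π / 2 := arctan_lt_pi_div_two T
  have haTpos : 0 < arctan T := by
    rw [← Real.arctan_zero]; exact Real.arctan_strictMono hTpos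
  have haR : arctan R < π / 2 := arctan_lt_pi_div_two R
  have haRpos : 0 < arctan R := by
    rw [← Real.arctan_zero]; exact Real.arctan_strictMono hRpos
  have hLa : L < a := by rw [hL, ha]; nlinarith
  have hbR : b < R := by rw [hR, hb]; nlinarith
  have hab : a < b := by rw [ha, hb]; nlinarith
  have hapos : 0 < a := hLpos.trans hLa
  have haR' : a < R := hab.trans hbR
  have hbpos : 0 < b := hapos.trans hab
  have tan_a : Real.tan (a / 2) = -T := by
    have h : a / 2 = -arctan T + m * π := by rw [ha]; ring
    rw [h, Real.tan_periodic.nat_mul m (-arctan T), Real.tan_neg, Real.tan_arctan]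
  have tan_b : Real.tan (b / 2) = R := by
    have h : b / 2 = arctan R + m * π := by rw [hb]; ring
    rw [h, Real.tan_periodic.nat_mul m (arctan R), Real.tan_arctan]
  set f : ℝ → ℝ := fun κ => (2 / κ) * Real.tan (κ / 2) - (1 - κ ^ 2 / μ) with hf
  have hq : (0:ℝ) < R ^ 2 / μ := by positivity
  have hfa : f a ≤ 0 := by
    have h1 : f a = -(2 * T / a) - 1 + a ^ 2 / μ := by
      simp only [hf]; rw [tan_a]; ring
    have h2 : 2 * (1 + R ^ 2 / μ) ≤ 2 * T / a := by
      rw [le_div_iff₀ hapos, hT]; nlinarith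
    have h4 : a ^ 2 / μ ≤ R ^ 2 / μ := (div_le_div_iff_of_pos_right hμ).2 (by nlinarith)
    rw [h1]; linarith
  have hfb : 0 ≤ f b := by
    have h1 : f b = 2 * R / b - 1 + b ^ 2 / μ := by
      simp only [hf]; rw [tan_b]; ring
    have h2 : (2:ℝ) ≤ 2 * R / b := by rw [le_div_iff₀ hbpos]; linarith
    have h3 : 0 ≤ b ^ 2 / μ := by positivity
    rw [h1]; linarith
  have hcont : ContinuousOn f (Icc a b) := by
    apply ContinuousOn.sub
    · apply ContinuousOn.mul
      · exact (continuousOn_const.div continuousOn_id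
          (fun x hx => (hapos.trans_le hx.1).ne'))
      · intro x hx
        apply ContinuousAt.continuousWithinAt
        apply (Real.continuousAt_tan.2 _).comp (continuousAt_id.div_const 2)
        -- cos (x/2) ≠ 0
        intro hcos
        rcases Real.cos_eq_zero_iff.1 hcos with ⟨k, hk⟩
        have hx1 : L < x := hLa.trans_le hx.1
        have hx2 : x < R := (hx.2).trans_lt hbR
        rw [hL] at hx1; rw [hR] at hx2
        simp only [id_eq] at hk
        have hx' : x = (2 * (k:ℝ) + 1) * π := by linarith
        rw [hx'] at hx1 hx2
        rw [mul_comm π] at hx1 hx2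
        have h1' : (2 * (m:ℝ) - 1) < 2 * k + 1 := lt_of_mul_lt_mul_right hx1 hπ.le
        have h2' : (2 * (k:ℝ) + 1) < 2 * m + 1 := lt_of_mul_lt_mul_right hx2 hπ.le
        have hk1 : (2 * (m:ℤ) - 1) < 2 * k + 1 := by exact_mod_cast h1'
        have hk2 : 2 * k + 1 < 2 * (m:ℤ) + 1 := by exact_mod_cast h2'
        omega
    · exact (continuousOn_const.sub ((continuousOn_id.pow 2).div_const μ))
  have := intermediate_value_Icc hab.le hcont
  have h0 : (0:ℝ) ∈ Icc (f a) (f b) := ⟨hfa, hfb⟩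
  obtain ⟨κ, hκmem, hκ⟩ := this h0
  refine ⟨κ, ⟨hLa.trans_le hκmem.1, lt_of_le_of_lt hκmem.2 hbR⟩, ?_⟩
  have : (2 / κ) * Real.tan (κ / 2) - (1 - κ ^ 2 / μ) = 0 := hκ
  linarith

theorem stmt10 (μ : ℝ) (hμ : 0 < μ) :
    (∀ m : ℕ, 0 < m →
      ∃ κ ∈ Set.Ioo (Real.pi * (2 * (m : ℝ) - 1)) (Real.pi * (2 * (m : ℝ) + 1)),
        (2 / κ) * Real.tan (κ / 2) = 1 - κ ^ 2 / μ) ∧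
    {κ : ℝ | 0 < κ ∧ (2 / κ) * Real.tan (κ / 2) = 1 - κ ^ 2 / μ}.Infinite := by
  have hπ := Real.pi_pos
  have hπ1 : (1:ℝ) < π := by linarith [Real.pi_gt_three]
  refine ⟨fun m hm => stmt10_key μ hμ m hm, ?_⟩
  intro hfin
  obtain ⟨B, hB⟩ := hfin.bddAbove
  obtain ⟨m, hmB⟩ := exists_nat_gt (max B 0)
  have hm : 0 < m := by
    have : (0:ℝ) < m := lt_of_le_of_lt (le_max_right B 0) hmB
    exact_mod_cast this
  obtain ⟨κ, hκmem, hκeq⟩ := stmt10_key μ hμ m hm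
  have hm1 : (1:ℝ) ≤ m := by exact_mod_cast hm
  have hLm : (m:ℝ) ≤ π * (2 * m - 1) := by nlinarith
  have hκpos : 0 < κ := by
    have : (0:ℝ) < π * (2*m-1) := by nlinarith
    exact this.trans hκmem.1
  have hκB : κ ≤ B := hB ⟨hκpos, hκeq⟩
  have : (max B 0 : ℝ) < κ := by
    calc (max B 0 : ℝ) < m := hmB
    _ ≤ π * (2 * m - 1) := hLm
    _ < κ := hκmem.1
  exact absurd (hκB.trans (le_max_left B 0)) (not_le.2 this)
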